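/- The run from o terminates at d if and only if there exists an integral switching flow, i.e., a function x : E → ℕ satisfying flow conservation of value 1 from o to d and the balancing inequalities 0 ≤ x(v,s₁(v)) ≤ x(v,s₀(v)) ≤ x(v,s₁(v)) + 1 for all v. -/

import Mathlib

open scoped Classical

/-- A switch graph: every vertex has an even successor `s0 v` and an odd successor `s1 v`. -/
structure SwitchGraph (V : Type) where
  s0 : V → V
  s1 : V → V

namespace SwitchGraph

variable {V : Type}

/-- The successor of `v` along the edge of parity `b` (`false` = even, `true` = odd). -/
def succ (G : SwitchGraph V) (v : V) (b : Bool) : V :=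
  if b then G.s1 v else G.s0 v

/-- One step of the run: move to the currently active successor and flip the switch. -/
def step [DecidableEq V] (G : SwitchGraph V) (p : V × (V → Bool)) : V × (V → Bool) :=
  (G.succ p.1 (p.2 p.1), Function.update p.2 p.1 (!p.2 p.1))

/-- The state of the run after `n` steps, starting at `o` with all switches even,
stopping (freezing) upon reaching `d`. -/
def run [DecidableEq V] (G : SwitchGraph V) (o d : V) (n : ℕ) : V × (V → Bool) :=
  (fun p => if p.1 = d then p else G.step p)^[n] (o, fun _ => false)

/-- The run from `o` terminates at `d`. -/
def Terminates [DecidableEq V] (G : SwitchGraph V) (o d : V) : Prop :=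
  ∃ n, (G.run o d n).1 = d

/-- Number of traversals of the outgoing edge of `v` of parity `b` during
the first `N` steps of the run. -/
def traversals [DecidableEq V] (G : SwitchGraph V) (o d : V) (N : ℕ) (v : V) (b : Bool) : ℕ :=
  ((Finset.range N).filter
    (fun n => (G.run o d n).1 = v ∧ v ≠ d ∧ (G.run o d n).2 v = b)).card

/-- Total weight on edges leaving `v`. -/
def outflow {M : Type} [AddCommMonoid M] (x : V → Bool → M) (v : V) : M :=
  x v false + x v true

/-- Total weight on edges entering `v`. -/
def inflow [Fintype V] [DecidableEq V] (G : SwitchGraph V) {M : Type} [AddCommMonoid M]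
    (x : V → Bool → M) (v : V) : M :=
  ∑ u : V, ∑ b : Bool, if G.succ u b = v then x u b else 0

/-- A switching flow: flow conservation of value 1 from `o` to `d`, together with the
balancing condition `x v true ≤ x v false ≤ x v true + 1` at every vertex. -/
def IsSwitchingFlow [Fintype V] [DecidableEq V] (G : SwitchGraph V) (o d : V)
    (x : V → Bool → ℕ) : Prop :=
  (∀ v, outflow x v + (if v = d then 1 else 0) = G.inflow x v + (if v = o then 1 else 0)) ∧
  (∀ v, x v true ≤ x v false ∧ x v false ≤ x v true + 1)

/-- The edge relation of the underlying directed graph `(V, E)`. -/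
def stepRel (G : SwitchGraph V) (a b : V) : Prop :=
  G.s0 a = b ∨ G.s1 a = b

/-- A dead end: a vertex with no directed path to `d` in `(V, E)`. -/
def DeadEnd (G : SwitchGraph V) (d w : V) : Prop :=
  ¬ Relation.ReflTransGen G.stepRel w d

/-- There is a directed walk of length `k` from `w` to `d` in `(V, E)`. -/
def Chain (G : SwitchGraph V) (w d : V) (k : ℕ) : Prop :=
  ∃ f : ℕ → V, f 0 = w ∧ f k = d ∧ ∀ i < k, G.stepRel (f i) (f (i + 1))

end SwitchGraph

open SwitchGraph

namespace SwitchGraph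
section Aux

set_option linter.unusedSectionVars false

variable {V : Type} [Fintype V] [DecidableEq V] (G : SwitchGraph V) (o d : V)

lemma run_zero : G.run o d 0 = (o, fun _ => false) := rfl

lemma run_succ' (n : ℕ) : G.run o d (n + 1) =
    if (G.run o d n).1 = d then G.run o d n else G.step (G.run o d n) := by
  rw [run, Function.iterate_succ_apply']; rfl

lemma traversals_succ' (N : ℕ) (v : V) (b : Bool) :
    G.traversals o d (N + 1) v b = G.traversals o d N v b +
      (if ((G.run o d N).1 = v ∧ v ≠ d ∧ (G.run o d N).2 v = b) then 1 else 0) := by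
  unfold traversals
  rw [Finset.range_add_one, Finset.filter_insert]
  split
  · rw [Finset.card_insert_of_notMem (by simp)]
  · simp

lemma traversals_zero' (v : V) (b : Bool) : G.traversals o d 0 v b = 0 := by
  simp [traversals]

lemma parity_lemma (N : ℕ) (v : V) (hv : v ≠ d) :
    G.traversals o d N v false =
      G.traversals o d N v true + (if (G.run o d N).2 v then 1 else 0) := by
  induction N with
  | zero => simp [traversals_zero', run_zero]
  | succ N ih =>
    rw [traversals_succ', traversals_succ', run_succ']
    by_cases hd : (G.run o d N).1 = d
    · have hne : ¬ (G.run o d N).1 = v := by rw [hd]; exact fun h => hv h.symm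
      rw [if_pos hd, if_neg (fun hc => hne hc.1), if_neg (fun hc => hne hc.1),
        add_zero, add_zero]
      exact ih
    · simp only [if_neg hd, step]
      by_cases hvv : (G.run o d N).1 = v
      · subst hvv
        rw [Function.update_self]
        cases h : (G.run o d N).2 (G.run o d N).1 <;> simp [h] at ih <;>
          simp [hv] <;> omega
      · have hupd : Function.update (G.run o d N).2 (G.run o d N).1
            (!(G.run o d N).2 (G.run o d N).1) v = (G.run o d N).2 v :=
          Function.update_of_ne (Ne.symm hvv) _ _
        simp [hvv, hupd, ih]

lemma inflow_delta (u0 : V) (b0 : Bool) (v : V) :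
    G.inflow (fun u b => if u = u0 ∧ b = b0 then (1:ℕ) else 0) v
      = if G.succ u0 b0 = v then 1 else 0 := by
  unfold inflow
  rw [Finset.sum_eq_single u0]
  · rw [Finset.sum_eq_single b0]
    · simp
    · intro b _ hb; simp [hb]
    · simp
  · intro u _ hu
    simp [hu]
  · simp

lemma inflow_add (x y : V → Bool → ℕ) (v : V) :
    G.inflow (fun u b => x u b + y u b) v = G.inflow x v + G.inflow y v := by
  unfold inflow
  rw [← Finset.sum_add_distrib]
  refine Finset.sum_congr rfl fun u _ => ?_
  rw [← Finset.sum_add_distrib]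
  refine Finset.sum_congr rfl fun b _ => ?_
  split <;> simp

lemma inflow_mono (x y : V → Bool → ℕ) (h : ∀ u b, x u b ≤ y u b) (v : V) :
    G.inflow x v ≤ G.inflow y v := by
  refine Finset.sum_le_sum fun u _ => Finset.sum_le_sum fun b _ => ?_
  split <;> simp [h]

lemma traversals_succ_eq (N : ℕ) (hd : (G.run o d N).1 ≠ d) (v : V) (b : Bool) :
    G.traversals o d (N + 1) v b = G.traversals o d N v b +
      (if v = (G.run o d N).1 ∧ b = (G.run o d N).2 (G.run o d N).1 then 1 else 0) := by
  rw [traversals_succ']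
  congr 1
  by_cases hv : (G.run o d N).1 = v
  · subst hv
    by_cases hb : (G.run o d N).2 (G.run o d N).1 = b
    · simp [hb, hd]
    · simp [hb, hd, Ne.symm hb]
  · simp [hv, Ne.symm hv]

lemma conservation (N : ℕ) (h : ∀ n < N, (G.run o d n).1 ≠ d) (v : V) :
    outflow (G.traversals o d N) v + (if (G.run o d N).1 = v then 1 else 0) =
      G.inflow (G.traversals o d N) v + (if v = o then 1 else 0) := by
  induction N with
  | zero =>
    have h0 : G.inflow (G.traversals o d 0) v = 0 := by
      unfold inflow
      simp [traversals_zero']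
    simp only [outflow, traversals_zero', run_zero, h0]
    simp [eq_comm]
    congr
  | succ N ih =>
    have hNd : (G.run o d N).1 ≠ d := h N (Nat.lt_succ_self N)
    have ih' := ih (fun n hn => h n (hn.trans (Nat.lt_succ_self N)))
    have hdec : ∀ u b, G.traversals o d (N + 1) u b = G.traversals o d N u b +
        (if u = (G.run o d N).1 ∧ b = (G.run o d N).2 (G.run o d N).1 then 1 else 0) :=
      fun u b => traversals_succ_eq G o d N hNd u b
    have e1 : outflow (G.traversals o d (N + 1)) v =
        outflow (G.traversals o d N) v + (if (G.run o d N).1 = v then 1 else 0) := by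
      unfold outflow
      rw [hdec, hdec]
      by_cases hv : (G.run o d N).1 = v
      · subst hv
        cases hbv : (G.run o d N).2 (G.run o d N).1 <;> simp [hbv] <;> omega
      · simp [hv, Ne.symm hv]
    have e2 : G.inflow (G.traversals o d (N + 1)) v =
        G.inflow (G.traversals o d N) v +
          (if G.succ (G.run o d N).1 ((G.run o d N).2 (G.run o d N).1) = v then 1 else 0) := by
      have heq : G.inflow (G.traversals o d (N + 1)) v =
          G.inflow (fun u b => G.traversals o d N u b +
            (if u = (G.run o d N).1 ∧ b = (G.run o d N).2 (G.run o d N).1 then 1 else 0)) v := by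
        congr 1
        funext u b
        exact hdec u b
      rw [heq, inflow_add, inflow_delta]
    have e3 : (G.run o d (N + 1)).1
        = G.succ (G.run o d N).1 ((G.run o d N).2 (G.run o d N).1) := by
      rw [run_succ', if_neg hNd]; rfl
    rw [e1, e2, e3]
    split_ifs at ih' ⊢ <;> omega

lemma total_traversals (N : ℕ) (h : ∀ n < N, (G.run o d n).1 ≠ d) :
    (∑ v : V, ∑ b : Bool, G.traversals o d N v b) = N := by
  induction N with
  | zero => simp [traversals_zero']
  | succ N ih =>
    have hNd : (G.run o d N).1 ≠ d := h N (Nat.lt_succ_self N)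
    have ih' := ih (fun n hn => h n (hn.trans (Nat.lt_succ_self N)))
    have hdec : ∀ u b, G.traversals o d (N + 1) u b = G.traversals o d N u b +
        (if u = (G.run o d N).1 ∧ b = (G.run o d N).2 (G.run o d N).1 then 1 else 0) :=
      fun u b => traversals_succ_eq G o d N hNd u b
    calc (∑ v : V, ∑ b : Bool, G.traversals o d (N + 1) v b)
        = (∑ v : V, ∑ b : Bool, (G.traversals o d N v b +
            (if v = (G.run o d N).1 ∧ b = (G.run o d N).2 (G.run o d N).1 then 1 else 0))) := by
          refine Finset.sum_congr rfl fun v _ => Finset.sum_congr rfl fun b _ => hdec v b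
      _ = (∑ v : V, ∑ b : Bool, G.traversals o d N v b) +
            (∑ v : V, ∑ b : Bool,
              (if v = (G.run o d N).1 ∧ b = (G.run o d N).2 (G.run o d N).1 then (1:ℕ) else 0)) := by
          rw [← Finset.sum_add_distrib]
          refine Finset.sum_congr rfl fun v _ => ?_
          rw [← Finset.sum_add_distrib]
      _ = N + 1 := by
          rw [ih']
          congr 1
          rw [Finset.sum_eq_single (G.run o d N).1]
          · rw [Finset.sum_eq_single ((G.run o d N).2 (G.run o d N).1)]
            · simp
            · intro b _ hb; simp [hb]
            · simp
          · intro u _ hu; simp [hu]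
          · simp

lemma traversals_le (x : V → Bool → ℕ) (hx : G.IsSwitchingFlow o d x)
    (hnd : ∀ n, (G.run o d n).1 ≠ d) :
    ∀ N v b, G.traversals o d N v b ≤ x v b := by
  intro N
  induction N with
  | zero => intro v b; simp [traversals_zero']
  | succ N ih =>
    intro v b
    have hNd : (G.run o d N).1 ≠ d := hnd N
    rw [traversals_succ_eq G o d N hNd v b]
    by_cases hc : v = (G.run o d N).1 ∧ b = (G.run o d N).2 (G.run o d N).1
    · obtain ⟨hv, hb⟩ := hc
      subst hv; subst hb
      rw [if_pos ⟨rfl, rfl⟩]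
      have hcons := conservation G o d N (fun n _ => hnd n) (G.run o d N).1
      rw [if_pos rfl] at hcons
      have hmono : G.inflow (G.traversals o d N) (G.run o d N).1 ≤ G.inflow x (G.run o d N).1 :=
        inflow_mono G _ x (fun u b => ih u b) (G.run o d N).1
      have hxcons := hx.1 (G.run o d N).1
      rw [if_neg hNd] at hxcons
      have hpar := parity_lemma G o d N (G.run o d N).1 hNd
      have hbal := hx.2 (G.run o d N).1
      simp only [outflow] at hcons hxcons
      cases hbs : (G.run o d N).2 (G.run o d N).1 <;> rw [hbs] at hpar <;>
        simp at hpar <;>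
        split_ifs at hcons hxcons <;> omega
    · rw [if_neg hc]
      simpa using ih v b

end Aux
end SwitchGraph

/-- The run terminates at `d` iff an integral switching flow exists. -/
theorem stmt15 {V : Type} [Fintype V] [DecidableEq V] (G : SwitchGraph V) (o d : V)
    (hod : o ≠ d) :
    G.Terminates o d ↔ ∃ x : V → Bool → ℕ, G.IsSwitchingFlow o d x := by
  constructor
  · intro hT
    classical
    set N := Nat.find hT with hN
    have hNd : (G.run o d N).1 = d := Nat.find_spec hT
    have hmin : ∀ n < N, (G.run o d n).1 ≠ d := fun n hn => Nat.find_min hT (hN ▸ hn)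
    refine ⟨G.traversals o d N, ?_, ?_⟩
    · intro v
      have := G.conservation o d N hmin v
      rw [hNd] at this
      rw [show (if v = d then 1 else 0) = (if d = v then 1 else 0) by
        by_cases h : v = d
        · simp [h]
        · simp [h, Ne.symm h]]
      exact this
    · intro v
      by_cases hv : v = d
      · subst hv
        simp [traversals]
      · have := G.parity_lemma o d N v hv
        constructor <;> [skip; skip] <;> split at this <;> omega
  · rintro ⟨x, hx⟩
    by_contra hT
    have hnd : ∀ n, (G.run o d n).1 ≠ d := fun n hn => hT ⟨n, hn⟩
    set S := ∑ v : V, ∑ b : Bool, x v b with hS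
    have h1 : (∑ v : V, ∑ b : Bool, G.traversals o d (S + 1) v b) = S + 1 :=
      G.total_traversals o d (S + 1) (fun n _ => hnd n)
    have h2 : (∑ v : V, ∑ b : Bool, G.traversals o d (S + 1) v b) ≤ S := by
      refine Finset.sum_le_sum fun v _ => Finset.sum_le_sum fun b _ => ?_
      exact G.traversals_le o d x hx hnd (S + 1) v b
    omega
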